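/- For every real N > 1 there exist multi-indices α, β ∈ ℕⁿ and a constant C > 0, depending only on n, N, ε and φ (in particular independent of δ, k and Υ), such that for every integer k with 0 ≤ k ≤ s, where s is the unique integer with 2^s < δ^{−2ε} ≤ 2^{s+1}, and every Υ ∈ S_{α,β}(ℝⁿ) one has ∫_{ℝⁿ} (1 + 2^{−(k+1)} |x|)^N |η₀^k(x)| dx ≤ C δ^{−2(N+1)ε} 2^{−k}. -/

import Mathlib

open MeasureTheory SchwartzMap Real Filter
open scoped FourierTransform Convolution Topology

noncomputable section

/-- The anisotropic scaling `x ↦ (x₁/δ, …, x_{n−1}/δ, x_n)`. -/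
def scaleI (n : ℕ) (δ : ℝ) (x : EuclideanSpace ℝ (Fin n)) : EuclideanSpace ℝ (Fin n) :=
  WithLp.toLp 2 (fun i => if (i : ℕ) < n - 1 then x i / δ else x i)

/-- `g_I(x) = δ^{−(n−1)} g(x₁/δ, …, x_{n−1}/δ, x_n)`. -/
def funI (n : ℕ) (δ : ℝ) (g : EuclideanSpace ℝ (Fin n) → ℂ) :
    EuclideanSpace ℝ (Fin n) → ℂ :=
  fun x => ((δ ^ (n - 1) : ℝ))⁻¹ • g (scaleI n δ x)

/-- Partial derivative in the `i`-th coordinate direction. -/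
def pderivI (n : ℕ) (i : Fin n) (f : EuclideanSpace ℝ (Fin n) → ℂ) :
    EuclideanSpace ℝ (Fin n) → ℂ :=
  fun x => fderiv ℝ f x (EuclideanSpace.single i 1)

/-- Multi-index partial derivative `∂^β`. -/
def mderiv (n : ℕ) (β : Fin n → ℕ) (f : EuclideanSpace ℝ (Fin n) → ℂ) :
    EuclideanSpace ℝ (Fin n) → ℂ :=
  (List.finRange n).foldr (fun i g => (pderivI n i)^[β i] g) f

/-- `Υ ∈ S_{α,β}(ℝⁿ)`. -/
def memS (n : ℕ) (α β : Fin n → ℕ)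
    (Υ : SchwartzMap (EuclideanSpace ℝ (Fin n)) ℂ) : Prop :=
  ∀ α' β' : Fin n → ℕ, (∑ i, α' i) ≤ (∑ i, α i) → (∑ i, β' i) ≤ (∑ i, β i) →
    ∀ x : EuclideanSpace ℝ (Fin n),
      ‖(∏ i, (x i) ^ (α' i)) • mderiv n β' (⇑Υ) x‖ ≤ 1


open scoped ENNReal RealInnerProductSpace

section Aux
variable {n : ℕ}
/-- Abbreviation for Euclidean space. -/
abbrev E (n : ℕ) := EuclideanSpace ℝ (Fin n)

lemma wmeas {N : ℝ} : Measurable (fun x : E n => ENNReal.ofReal ((1+‖x‖)^N)) := by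
  fun_prop

lemma wsubmult {N : ℝ} (hN : 0 ≤ N) (x t : E n) :
    ENNReal.ofReal ((1+‖x‖)^N) ≤ ENNReal.ofReal ((1+‖t‖)^N) * ENNReal.ofReal ((1+‖x-t‖)^N) := by
  have h0 : ‖x‖ ≤ ‖t‖ + ‖x - t‖ := by
    simpa using norm_add_le t (x - t)
  have h1 : (1:ℝ)+‖x‖ ≤ (1+‖t‖)*(1+‖x-t‖) := by nlinarith [norm_nonneg t, norm_nonneg (x-t)]
  rw [← ENNReal.ofReal_mul (by positivity), ← Real.mul_rpow (by positivity) (by positivity)]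
  exact ENNReal.ofReal_le_ofReal (Real.rpow_le_rpow (by positivity) h1 hN)

lemma wconv_core {N : ℝ} (hN : 0 ≤ N) (p q : E n → ℝ≥0∞) (hp : Measurable p) (hq : Measurable q) :
    ∫⁻ x, ENNReal.ofReal ((1+‖x‖)^N) * ∫⁻ t, p t * q (x - t) ≤
      (∫⁻ t, ENNReal.ofReal ((1+‖t‖)^N) * p t) * ∫⁻ y, ENNReal.ofReal ((1+‖y‖)^N) * q y := by
  set w : E n → ℝ≥0∞ := fun x => ENNReal.ofReal ((1+‖x‖)^N) with hw
  have hwm : Measurable w := wmeas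
  have hsub : Measurable fun z : E n × E n => z.1 - z.2 := measurable_fst.sub measurable_snd
  calc ∫⁻ x, w x * ∫⁻ t, p t * q (x - t)
      ≤ ∫⁻ x, ∫⁻ t, (w t * p t) * (w (x-t) * q (x-t)) := by
        refine lintegral_mono fun x => ?_
        rw [← lintegral_const_mul' _ _ ENNReal.ofReal_ne_top]
        refine lintegral_mono fun t => ?_
        calc w x * (p t * q (x-t)) ≤ (w t * w (x-t)) * (p t * q (x-t)) :=
              mul_le_mul_left (wsubmult hN x t) _
          _ = (w t * p t) * (w (x-t) * q (x-t)) := by ring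
    _ = ∫⁻ t, ∫⁻ x, (w t * p t) * (w (x-t) * q (x-t)) := by
        refine lintegral_lintegral_swap ?_
        exact (((hwm.comp measurable_snd).mul (hp.comp measurable_snd)).mul
          (((hwm.comp hsub).mul (hq.comp hsub)))).aemeasurable
    _ = ∫⁻ t, (w t * p t) * ∫⁻ x, (w (x-t) * q (x-t)) := by
        refine lintegral_congr fun t => ?_
        exact lintegral_const_mul _ ((hwm.comp (measurable_id.sub measurable_const)).mul
          (hq.comp (measurable_id.sub measurable_const)))
    _ = ∫⁻ t, (w t * p t) * ∫⁻ y, (w y * q y) := by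
        refine lintegral_congr fun t => ?_
        congr 1
        exact lintegral_sub_right_eq_self (fun y => w y * q y) t
    _ = (∫⁻ t, w t * p t) * ∫⁻ y, (w y * q y) := lintegral_mul_const _ (hwm.mul hp)

lemma conv_nnnorm_le (f g : E n → ℂ) (x : E n) :
    (‖(f ⋆[ContinuousLinearMap.mul ℝ ℂ, volume] g) x‖₊ : ℝ≥0∞) ≤ ∫⁻ t, ‖f t‖₊ * ‖g (x-t)‖₊ := by
  refine le_trans (enorm_integral_le_lintegral_enorm _) ?_
  refine le_of_eq (lintegral_congr fun t => ?_)
  simp [ContinuousLinearMap.mul_apply', nnnorm_mul, ENNReal.coe_mul]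
  rfl

lemma triple_conv_bound {N : ℝ} (hN : 0 ≤ N) (f g u : E n → ℂ)
    (hf : Measurable f) (hg : Measurable g) (hu : Measurable u) :
    ∫⁻ x, ENNReal.ofReal ((1+‖x‖)^N) *
        ‖((f ⋆[ContinuousLinearMap.mul ℝ ℂ, volume] g) ⋆[ContinuousLinearMap.mul ℝ ℂ, volume] u) x‖₊ ≤
      (∫⁻ x, ENNReal.ofReal ((1+‖x‖)^N) * ‖f x‖₊) *
      (∫⁻ x, ENNReal.ofReal ((1+‖x‖)^N) * ‖g x‖₊) *
      (∫⁻ x, ENNReal.ofReal ((1+‖x‖)^N) * ‖u x‖₊) := by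
  set w : E n → ℝ≥0∞ := fun x => ENNReal.ofReal ((1+‖x‖)^N) with hw
  set h : E n → ℝ≥0∞ := fun t => ∫⁻ s, ‖f s‖₊ * ‖g (t-s)‖₊ with hh
  have hsub : Measurable fun z : E n × E n => z.1 - z.2 := measurable_fst.sub measurable_snd
  have hmeas : Measurable h := by
    refine Measurable.lintegral_prod_right ?_
    exact (hf.comp measurable_snd).nnnorm.coe_nnreal_ennreal.mul
      ((hg.comp hsub).nnnorm.coe_nnreal_ennreal)
  have step1 : ∀ x, (‖((f ⋆[ContinuousLinearMap.mul ℝ ℂ, volume] g) ⋆[ContinuousLinearMap.mul ℝ ℂ, volume] u) x‖₊ : ℝ≥0∞)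
      ≤ ∫⁻ t, h t * ‖u (x-t)‖₊ := fun x =>
    le_trans (conv_nnnorm_le _ _ x) (lintegral_mono fun t =>
      mul_le_mul_left (conv_nnnorm_le f g t) _)
  calc ∫⁻ x, w x * ‖((f ⋆[ContinuousLinearMap.mul ℝ ℂ, volume] g) ⋆[ContinuousLinearMap.mul ℝ ℂ, volume] u) x‖₊
      ≤ ∫⁻ x, w x * ∫⁻ t, h t * ‖u (x-t)‖₊ :=
        lintegral_mono fun x => mul_le_mul_right (step1 x) _
    _ ≤ (∫⁻ t, w t * h t) * ∫⁻ y, w y * ‖u y‖₊ :=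
        wconv_core hN h _ hmeas hu.nnnorm.coe_nnreal_ennreal
    _ ≤ ((∫⁻ x, w x * ‖f x‖₊) * (∫⁻ x, w x * ‖g x‖₊)) * ∫⁻ y, w y * ‖u y‖₊ := by
        refine mul_le_mul_left ?_ _
        exact wconv_core hN _ _ hf.nnnorm.coe_nnreal_ennreal hg.nnnorm.coe_nnreal_ennreal

lemma lgen {N : ℝ} (hN : 0 ≤ N) (T : E n →ₗ[ℝ] E n) (hdet : LinearMap.det T ≠ 0)
    (hT : ∀ x, ‖x‖ ≤ ‖T x‖) (G : E n → ℝ≥0∞) (hG : Measurable G) :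
    ∫⁻ x, ENNReal.ofReal ((1+‖x‖)^N) * G (T x) ≤
      ENNReal.ofReal |(LinearMap.det T)⁻¹| * ∫⁻ x, ENNReal.ofReal ((1+‖x‖)^N) * G x := by
  set w : E n → ℝ≥0∞ := fun x => ENNReal.ofReal ((1+‖x‖)^N) with hw
  have hTc : Continuous T := T.continuous_of_finiteDimensional
  have h1 : ∫⁻ x, w x * G (T x) ≤ ∫⁻ x, w (T x) * G (T x) := by
    refine lintegral_mono fun x => mul_le_mul_left ?_ _
    exact ENNReal.ofReal_le_ofReal
      (Real.rpow_le_rpow (by positivity) (by linarith [hT x]) hN)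
  refine h1.trans (le_of_eq ?_)
  have h2 : ∫⁻ x, w (T x) * G (T x) = ∫⁻ y, w y * G y ∂(Measure.map T volume) :=
    (lintegral_map (wmeas.mul hG) hTc.measurable).symm
  rw [h2, Measure.map_linearMap_addHaar_eq_smul_addHaar volume hdet, lintegral_smul_measure, smul_eq_mul]

lemma W_scale {N : ℝ} (hN : 0 ≤ N) (T : E n →ₗ[ℝ] E n) (hdet : LinearMap.det T ≠ 0)
    (hT : ∀ x, ‖x‖ ≤ ‖T x‖) (c : ℝ) (hc0 : 0 ≤ c) (hc : c * |(LinearMap.det T)⁻¹| ≤ 1)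
    (g : E n → ℂ) (hg : Measurable g) :
    ∫⁻ x, ENNReal.ofReal ((1+‖x‖)^N) * ‖c • g (T x)‖₊ ≤
      ∫⁻ x, ENNReal.ofReal ((1+‖x‖)^N) * ‖g x‖₊ := by
  set w : E n → ℝ≥0∞ := fun x => ENNReal.ofReal ((1+‖x‖)^N) with hw
  have key : ∀ x : E n, (‖c • g (T x)‖₊ : ℝ≥0∞) = ENNReal.ofReal c * ‖g (T x)‖₊ := by
    intro x
    rw [nnnorm_smul, ENNReal.coe_mul, ← enorm_eq_nnnorm, Real.enorm_eq_ofReal hc0]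
  calc ∫⁻ x, w x * ‖c • g (T x)‖₊
      = ENNReal.ofReal c * ∫⁻ x, w x * (‖g (T x)‖₊ : ℝ≥0∞) := by
        rw [← lintegral_const_mul' _ _ ENNReal.ofReal_ne_top]
        exact lintegral_congr fun x => by rw [key]; ring
    _ ≤ ENNReal.ofReal c * (ENNReal.ofReal |(LinearMap.det T)⁻¹| * ∫⁻ x, w x * ‖g x‖₊) := by
        refine mul_le_mul_right ?_ _
        exact lgen hN T hdet hT _ hg.nnnorm.coe_nnreal_ennreal
    _ ≤ ∫⁻ x, w x * ‖g x‖₊ := by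
        rw [← mul_assoc, ← ENNReal.ofReal_mul hc0]
        calc ENNReal.ofReal (c * |(LinearMap.det T)⁻¹|) * ∫⁻ x, w x * ‖g x‖₊
            ≤ 1 * ∫⁻ x, w x * ‖g x‖₊ := by
              refine mul_le_mul_left ?_ _
              simpa using ENNReal.ofReal_le_ofReal hc
          _ = _ := one_mul _

def TmapI (n : ℕ) (δ : ℝ) : E n →ₗ[ℝ] E n where
  toFun := scaleI n δ
  map_add' x y := by
    ext i
    simp only [scaleI, PiLp.add_apply, PiLp.toLp_apply]
    split_ifs <;> ring
  map_smul' c x := by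
    ext i
    simp only [scaleI, PiLp.smul_apply, smul_eq_mul, RingHom.id_apply, PiLp.toLp_apply]
    split_ifs <;> ring

lemma det_TmapI (n : ℕ) (δ : ℝ) : LinearMap.det (TmapI n δ) = δ⁻¹ ^ (n-1) := by
  classical
  set b := (EuclideanSpace.basisFun (Fin n) ℝ).toBasis with hb
  have hmat : LinearMap.toMatrix b b (TmapI n δ) =
      Matrix.diagonal (fun i : Fin n => if (i:ℕ) < n - 1 then δ⁻¹ else 1) := by
    ext i j
    rw [LinearMap.toMatrix_apply]
    simp only [hb, OrthonormalBasis.coe_toBasis, OrthonormalBasis.coe_toBasis_repr_apply,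
      EuclideanSpace.basisFun_repr, EuclideanSpace.basisFun_apply]
    show scaleI n δ (EuclideanSpace.single j 1) i = _
    rcases eq_or_ne i j with rfl | hij
    · simp only [scaleI, EuclideanSpace.single_apply, Matrix.diagonal_apply_eq, if_pos rfl]
      split_ifs <;> simp [one_div]
    · simp [scaleI, EuclideanSpace.single_apply, Matrix.diagonal_apply_ne _ hij, hij]
  rw [← LinearMap.det_toMatrix b, hmat, Matrix.det_diagonal]
  rw [Fin.prod_univ_eq_prod_range (fun i => if i < n - 1 then δ⁻¹ else (1:ℝ)) n]
  rw [Finset.prod_ite, Finset.prod_const, Finset.prod_const, one_pow, mul_one]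
  congr 1
  have : Finset.filter (fun x => x < n - 1) (Finset.range n) = Finset.range (n-1) := by
    ext x
    simp only [Finset.mem_filter, Finset.mem_range]
    omega
  rw [this, Finset.card_range]

lemma norm_le_TmapI {δ : ℝ} (hδ0 : 0 < δ) (hδ1 : δ ≤ 1) (x : E n) : ‖x‖ ≤ ‖TmapI n δ x‖ := by
  rw [EuclideanSpace.norm_eq, EuclideanSpace.norm_eq]
  apply Real.sqrt_le_sqrt
  apply Finset.sum_le_sum
  intro i _
  have key : ‖x i‖ ≤ ‖(TmapI n δ x) i‖ := by
    show ‖x i‖ ≤ ‖scaleI n δ x i‖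
    unfold scaleI
    show ‖x i‖ ≤ ‖(if (i : ℕ) < n - 1 then x i / δ else x i)‖
    split_ifs
    · rw [Real.norm_eq_abs, Real.norm_eq_abs, abs_div, abs_of_pos hδ0]
      rw [le_div_iff₀ hδ0]
      exact mul_le_of_le_one_right (abs_nonneg _) hδ1
    · exact le_refl _
  exact pow_le_pow_left₀ (norm_nonneg _) key 2

lemma W_funI {N : ℝ} (hN : 0 ≤ N) {δ : ℝ} (hδ0 : 0 < δ) (hδ1 : δ ≤ 1)
    (g : E n → ℂ) (hg : Measurable g) :
    ∫⁻ x, ENNReal.ofReal ((1+‖x‖)^N) * ‖funI n δ g x‖₊ ≤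
      ∫⁻ x, ENNReal.ofReal ((1+‖x‖)^N) * ‖g x‖₊ := by
  have hdet : LinearMap.det (TmapI n δ) = δ⁻¹ ^ (n-1) := det_TmapI n δ
  have hpos : (0:ℝ) < δ ^ (n-1) := pow_pos hδ0 _
  refine W_scale hN (TmapI n δ) (by rw [hdet]; positivity) (norm_le_TmapI hδ0 hδ1)
    ((δ ^ (n-1) : ℝ))⁻¹ (by positivity) ?_ g hg
  rw [hdet, inv_pow, inv_inv, abs_of_pos hpos, inv_mul_cancel₀ hpos.ne']

lemma W_dil {N : ℝ} (hN : 0 ≤ N) {t : ℝ} (ht0 : 0 < t) (ht1 : t ≤ 1)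
    (g : E n → ℂ) (hg : Measurable g) :
    ∫⁻ x, ENNReal.ofReal ((1+‖x‖)^N) * ‖(fun y => ((t ^ n : ℝ))⁻¹ • g (t⁻¹ • y)) x‖₊ ≤
      ∫⁻ x, ENNReal.ofReal ((1+‖x‖)^N) * ‖g x‖₊ := by
  set T : E n →ₗ[ℝ] E n := t⁻¹ • LinearMap.id with hT
  have hTx : ∀ x : E n, T x = t⁻¹ • x := fun x => rfl
  have hpos : (0:ℝ) < t ^ n := pow_pos ht0 _
  have hdet : LinearMap.det T = (t⁻¹) ^ n := by
    rw [hT, LinearMap.det_smul, LinearMap.det_id, mul_one, finrank_euclideanSpace_fin]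
  have hnorm : ∀ x : E n, ‖x‖ ≤ ‖T x‖ := by
    intro x
    rw [hTx, norm_smul, Real.norm_eq_abs, abs_of_pos (inv_pos.2 ht0)]
    have h1 : (1:ℝ) ≤ t⁻¹ := (one_le_inv₀ ht0).2 ht1
    nlinarith [norm_nonneg x]
  refine W_scale hN T (by rw [hdet]; positivity) hnorm ((t ^ n : ℝ))⁻¹ (by positivity) ?_ g hg
  rw [hdet, inv_pow, inv_inv, abs_of_pos hpos, inv_mul_cancel₀ hpos.ne']

lemma fourier_dil (φc : E n → ℂ) {t : ℝ} (ht : 0 < t) (ξ : E n) :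
    𝓕 (fun x => ((t ^ n : ℝ))⁻¹ • φc (t⁻¹ • x)) ξ = 𝓕 φc (t • ξ) := by
  rw [Real.fourier_eq, Real.fourier_eq]
  set g : E n → ℂ := fun y => 𝐞 (-⟪y, t • ξ⟫) • (((t ^ n : ℝ))⁻¹ • φc y) with hg
  have key : ∀ v : E n, 𝐞 (-⟪v, ξ⟫) • (((t ^ n : ℝ))⁻¹ • φc (t⁻¹ • v)) = g (t⁻¹ • v) := by
    intro v
    have h2 : ⟪t⁻¹ • v, t • ξ⟫ = ⟪v, ξ⟫ := by
      rw [real_inner_smul_left, real_inner_smul_right, ← mul_assoc,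
        inv_mul_cancel₀ ht.ne', one_mul]
    rw [hg]
    simp only [h2]
  have h3 : ∫ v, g (t⁻¹ • v) = (t ^ Module.finrank ℝ (E n) : ℝ) • ∫ y, g y :=
    Measure.integral_comp_inv_smul_of_nonneg volume g ht.le
  calc (∫ v, 𝐞 (-⟪v, ξ⟫) • (((t ^ n : ℝ))⁻¹ • φc (t⁻¹ • v)))
      = ∫ v, g (t⁻¹ • v) := integral_congr_ae (Filter.Eventually.of_forall key)
    _ = (t ^ Module.finrank ℝ (E n) : ℝ) • ∫ y, g y := h3
    _ = ∫ y, 𝐞 (-⟪y, t • ξ⟫) • φc y := by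
        rw [finrank_euclideanSpace_fin, ← integral_smul]
        refine integral_congr_ae (Filter.Eventually.of_forall fun y => ?_)
        rw [hg]
        simp only [smul_comm (t ^ n : ℝ) (𝐞 (-⟪y, t • ξ⟫)), smul_smul,
          mul_inv_cancel₀ (pow_pos ht n).ne', one_smul]

lemma fourier_sub2 (f g : E n → ℂ) (hf : Integrable f) (hg : Integrable g) (ξ : E n) :
    𝓕 (f - g) ξ = 𝓕 f ξ - 𝓕 g ξ := by
  rw [Real.fourier_eq, Real.fourier_eq, Real.fourier_eq]
  rw [← integral_sub]
  · refine integral_congr_ae (Filter.Eventually.of_forall fun v => ?_)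
    simp [smul_sub]
  · exact (Real.fourierIntegral_convergent_iff ξ).2 hf
  · exact (Real.fourierIntegral_convergent_iff ξ).2 hg

lemma schwartz_eq_of_fourier_eq (ψ : SchwartzMap (E n) ℂ) (g : E n → ℂ)
    (hgc : Continuous g) (hgi : Integrable g) (hgfi : Integrable (𝓕 g))
    (h : ∀ ξ, 𝓕 ⇑ψ ξ = 𝓕 g ξ) : ⇑ψ = g := by
  have hψi : Integrable (⇑ψ) := ψ.integrable
  have hψfi : Integrable (𝓕 ⇑ψ) := by
    have : 𝓕 ⇑ψ = ⇑(SchwartzMap.fourierTransformCLM ℝ ψ) := by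
      rw [SchwartzMap.fourierTransformCLM_apply, SchwartzMap.fourier_coe]
    rw [this]
    exact SchwartzMap.integrable _
  set h0 : E n → ℂ := ⇑ψ - g with hh0
  have hcont : Continuous h0 := ψ.continuous.sub hgc
  have hint : Integrable h0 := hψi.sub hgi
  have hF : 𝓕 h0 = fun _ => (0:ℂ) := by
    funext ξ
    rw [hh0, fourier_sub2 _ _ hψi hgi, h ξ, sub_self]
  have hFi : Integrable (𝓕 h0) := by rw [hF]; exact integrable_zero _ _ _
  have hinv := hcont.fourierInv_fourier_eq hint hFi
  have hzero : 𝓕⁻ (𝓕 h0) = fun _ => (0:ℂ) := by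
    rw [hF]
    funext v
    rw [Real.fourierInv_eq]
    simp
  have : h0 = fun _ => (0:ℂ) := by rw [← hinv, hzero]
  funext x
  have := congrFun this x
  simpa [hh0, sub_eq_zero] using this

/-- dilate of a function -/
def dil (φc : E n → ℂ) (t : ℝ) : E n → ℂ := fun x => ((t ^ n : ℝ))⁻¹ • φc (t⁻¹ • x)

lemma dil_continuous (φc : SchwartzMap (E n) ℂ) {t : ℝ} : Continuous (dil (n := n) ⇑φc t) :=
  (φc.continuous.comp (continuous_const_smul t⁻¹)).const_smul ((t ^ n : ℝ))⁻¹

lemma dil_integrable (φc : SchwartzMap (E n) ℂ) {t : ℝ} (ht : 0 < t) :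
    Integrable (dil (n := n) ⇑φc t) :=
  (φc.integrable.comp_smul (inv_ne_zero ht.ne')).smul ((t ^ n : ℝ))⁻¹

lemma dil_fourier (φc : SchwartzMap (E n) ℂ) {t : ℝ} (ht : 0 < t) (ξ : E n) :
    𝓕 (dil (n := n) ⇑φc t) ξ = 𝓕 ⇑φc (t • ξ) := fourier_dil ⇑φc ht ξ

lemma schwartz_eq_dil_sub (ψ φc : SchwartzMap (E n) ℂ) {t1 t2 : ℝ}
    (ht1 : 0 < t1) (ht2 : 0 < t2)
    (h : ∀ ξ, 𝓕 ⇑ψ ξ = 𝓕 ⇑φc (t1 • ξ) - 𝓕 ⇑φc (t2 • ξ)) :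
    ⇑ψ = dil (n := n) ⇑φc t1 - dil (n := n) ⇑φc t2 := by
  have hφfi : Integrable (𝓕 ⇑φc) := by
    have : 𝓕 ⇑φc = ⇑(SchwartzMap.fourierTransformCLM ℝ φc) := by
      rw [SchwartzMap.fourierTransformCLM_apply, SchwartzMap.fourier_coe]
    rw [this]; exact SchwartzMap.integrable _
  refine schwartz_eq_of_fourier_eq ψ _ ((dil_continuous φc).sub (dil_continuous φc))
    ((dil_integrable φc ht1).sub (dil_integrable φc ht2)) ?_ ?_
  · have hFg : 𝓕 (dil (n := n) ⇑φc t1 - dil ⇑φc t2) =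
        fun ξ => 𝓕 ⇑φc (t1 • ξ) - 𝓕 ⇑φc (t2 • ξ) := by
      funext ξ
      rw [fourier_sub2 _ _ (dil_integrable φc ht1) (dil_integrable φc ht2),
        dil_fourier φc ht1, dil_fourier φc ht2]
    rw [hFg]
    exact (hφfi.comp_smul ht1.ne').sub (hφfi.comp_smul ht2.ne')
  · intro ξ
    rw [fourier_sub2 _ _ (dil_integrable φc ht1) (dil_integrable φc ht2),
      dil_fourier φc ht1, dil_fourier φc ht2, h ξ]

lemma mderiv_zero_aux (f : E n → ℂ) : mderiv n (fun _ => 0) f = f := by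
  unfold mderiv
  generalize List.finRange n = l
  induction l with
  | nil => rfl
  | cons a l ih => simpa using ih

lemma memS_decay {m : ℕ} (hn : 1 ≤ n) (Υ : SchwartzMap (E n) ℂ)
    (hΥ : memS n (fun _ => m) (fun _ => 0) Υ) (x : E n) :
    (1 + ‖x‖) ^ m * ‖Υ x‖ ≤ ((n:ℝ)+1) ^ m := by
  have hne : (Finset.univ : Finset (Fin n)).Nonempty := by
    rw [Finset.univ_nonempty_iff]
    exact Fin.pos_iff_nonempty.1 hn
  set M : ℝ := Finset.univ.sup' hne (fun i => |x i|) with hM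
  have hMle : ∀ i, |x i| ≤ M := fun i => Finset.le_sup' (fun j => |x j|) (Finset.mem_univ i)
  have hM0 : 0 ≤ M := le_trans (abs_nonneg (x hne.choose)) (hMle hne.choose)
  -- bound on Υ itself
  have h1 : ‖Υ x‖ ≤ 1 := by
    have := hΥ (fun _ => 0) (fun _ => 0) (by simp) (by simp) x
    rw [mderiv_zero_aux] at this
    simpa using this
  -- bound with coordinate power
  have h2 : M ^ m * ‖Υ x‖ ≤ 1 := by
    obtain ⟨i₀, -, hi₀⟩ := Finset.exists_mem_eq_sup' hne (fun i => |x i|)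
    have := hΥ (fun j => if j = i₀ then m else 0) (fun _ => 0) ?_ (by simp) x
    · rw [mderiv_zero_aux] at this
      have hprod : (∏ i, (x i) ^ (if i = i₀ then m else 0)) = (x i₀) ^ m := by
        have he : ∀ i, (x i) ^ (if i = i₀ then m else 0) = if i = i₀ then (x i) ^ m else 1 := by
          intro i; split_ifs <;> simp
        simp_rw [he]
        rw [Finset.prod_ite_eq' Finset.univ i₀ (fun i => (x i)^m)]
        simp
      rw [hprod, norm_smul] at this
      rw [hM, hi₀, ← abs_pow]
      calc |x i₀ ^ m| * ‖Υ x‖ = ‖(x i₀ ^ m : ℝ)‖ * ‖Υ x‖ := by rw [Real.norm_eq_abs]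
        _ ≤ 1 := this
    · rw [Finset.sum_ite_eq' Finset.univ i₀ (fun _ => m)]
      simp only [Finset.mem_univ, if_true, Finset.sum_const, Finset.card_univ, Fintype.card_fin,
        smul_eq_mul]
      exact Nat.le_mul_of_pos_left m (by omega)
  -- norm ≤ n * M
  have hnorm : ‖x‖ ≤ (n:ℝ) * M := by
    rw [EuclideanSpace.norm_eq]
    have hsum : (∑ i, ‖x i‖ ^ 2) ≤ (n:ℝ) * M^2 := by
      calc (∑ i, ‖x i‖ ^ 2) ≤ ∑ _i : Fin n, M^2 := by
            refine Finset.sum_le_sum fun i _ => ?_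
            rw [Real.norm_eq_abs]
            exact pow_le_pow_left₀ (abs_nonneg _) (hMle i) 2
        _ = (n:ℝ) * M^2 := by simp [mul_comm]
    calc Real.sqrt (∑ i, ‖x i‖ ^ 2) ≤ Real.sqrt ((n:ℝ) * M^2) := Real.sqrt_le_sqrt hsum
      _ ≤ Real.sqrt (((n:ℝ) * M)^2) := by
          apply Real.sqrt_le_sqrt
          have h1n : (1:ℝ) ≤ (n:ℝ) := by exact_mod_cast hn
          nlinarith
      _ = (n:ℝ) * M := Real.sqrt_sq (by positivity)
  -- combine
  have hbase : 1 + ‖x‖ ≤ ((n:ℝ)+1) * max 1 M := by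
    rcases le_total M 1 with h | h
    · rw [max_eq_left h]
      have h1n : (1:ℝ) ≤ (n:ℝ) := by exact_mod_cast hn
      have : ‖x‖ ≤ (n:ℝ) := le_trans hnorm (by nlinarith)
      linarith
    · rw [max_eq_right h]
      have h1n : (1:ℝ) ≤ (n:ℝ) := by exact_mod_cast hn
      nlinarith
  calc (1 + ‖x‖) ^ m * ‖Υ x‖ ≤ (((n:ℝ)+1) * max 1 M) ^ m * ‖Υ x‖ := by
        refine mul_le_mul_of_nonneg_right (pow_le_pow_left₀ (by positivity) hbase m) (norm_nonneg _)
    _ = ((n:ℝ)+1)^m * ((max 1 M) ^ m * ‖Υ x‖) := by rw [mul_pow]; ring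
    _ ≤ ((n:ℝ)+1)^m * 1 := by
        refine mul_le_mul_of_nonneg_left ?_ (by positivity)
        rcases le_total M 1 with h | h
        · rw [max_eq_left h, one_pow, one_mul]; exact h1
        · rw [max_eq_right h]; exact h2
    _ = ((n:ℝ)+1)^m := mul_one _

/-- the weighted integral of the Japanese bracket -/
def Kn (n : ℕ) : ℝ≥0∞ := ∫⁻ x : E n, ENNReal.ofReal ((1+‖x‖) ^ (-((n:ℝ)+1)))

lemma Kn_lt_top : Kn n < ⊤ := by
  have hint : Integrable (fun x : E n => (1+‖x‖) ^ (-((n:ℝ)+1))) :=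
    integrable_one_add_norm (by rw [finrank_euclideanSpace_fin]; linarith)
  have := hint.hasFiniteIntegral
  rw [HasFiniteIntegral] at this
  refine lt_of_le_of_lt (le_of_eq ?_) this
  refine lintegral_congr fun x => ?_
  rw [← Real.enorm_eq_ofReal (by positivity)]

lemma W_le_of_decay {N : ℝ} (hN : 0 ≤ N) {m : ℕ} (hm : N + ((n:ℝ)+1) ≤ m)
    (f : E n → ℂ) (c : ℝ) (hc : 0 ≤ c) (hdecay : ∀ x, (1+‖x‖) ^ m * ‖f x‖ ≤ c) :
    ∫⁻ x, ENNReal.ofReal ((1+‖x‖)^N) * ‖f x‖₊ ≤ ENNReal.ofReal c * Kn n := by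
  rw [Kn, ← lintegral_const_mul' _ _ ENNReal.ofReal_ne_top]
  refine lintegral_mono fun x => ?_
  rw [← enorm_eq_nnnorm, ← ofReal_norm_eq_enorm, ← ENNReal.ofReal_mul (by positivity),
    ← ENNReal.ofReal_mul hc]
  refine ENNReal.ofReal_le_ofReal ?_
  set b : ℝ := 1 + ‖x‖ with hb
  have hb1 : (1:ℝ) ≤ b := by rw [hb]; linarith [norm_nonneg x]
  have hb0 : (0:ℝ) < b := lt_of_lt_of_le one_pos hb1
  have key : b ^ (N + ((n:ℝ)+1)) * ‖f x‖ ≤ c := by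
    calc b ^ (N + ((n:ℝ)+1)) * ‖f x‖ ≤ b ^ (m:ℝ) * ‖f x‖ := by
          exact mul_le_mul_of_nonneg_right
            (Real.rpow_le_rpow_of_exponent_le hb1 hm) (norm_nonneg _)
      _ = b ^ m * ‖f x‖ := by rw [Real.rpow_natCast]
      _ ≤ c := hdecay x
  calc b ^ N * ‖f x‖ = b ^ (N + ((n:ℝ)+1)) * b ^ (-((n:ℝ)+1)) * ‖f x‖ := by
        rw [← Real.rpow_add hb0]; ring_nf
    _ = (b ^ (N + ((n:ℝ)+1)) * ‖f x‖) * b ^ (-((n:ℝ)+1)) := by ring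
    _ ≤ c * b ^ (-((n:ℝ)+1)) := by
        exact mul_le_mul_of_nonneg_right key (Real.rpow_nonneg hb0.le _)

/-- decay bound for a Schwartz function from seminorms -/
lemma schwartz_decay_bound (f : SchwartzMap (E n) ℂ) (m : ℕ) (x : E n) :
    (1+‖x‖) ^ m * ‖f x‖ ≤
      2 ^ m * ((Finset.Iic (m, 0)).sup (fun p => SchwartzMap.seminorm ℝ p.1 p.2) f) := by
  have := SchwartzMap.one_add_le_sup_seminorm_apply (𝕜 := ℝ) (m := (m, 0)) le_rfl le_rfl f x
  rwa [norm_iteratedFDeriv_zero] at this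

lemma W_add {N : ℝ} (f g : E n → ℂ) (hf : Measurable f) :
    ∫⁻ x, ENNReal.ofReal ((1+‖x‖)^N) * ‖(f + g) x‖₊ ≤
      (∫⁻ x, ENNReal.ofReal ((1+‖x‖)^N) * ‖f x‖₊) +
      (∫⁻ x, ENNReal.ofReal ((1+‖x‖)^N) * ‖g x‖₊) := by
  rw [← lintegral_add_left (f := fun x => ENNReal.ofReal ((1+‖x‖)^N) * (‖f x‖₊ : ℝ≥0∞)) (wmeas.mul hf.nnnorm.coe_nnreal_ennreal)]
  refine lintegral_mono fun x => ?_
  rw [← mul_add]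
  refine mul_le_mul_right ?_ _
  calc (‖(f + g) x‖₊ : ℝ≥0∞) ≤ ↑(‖f x‖₊ + ‖g x‖₊) := by
        exact_mod_cast nnnorm_add_le (f x) (g x)
    _ = (‖f x‖₊ : ℝ≥0∞) + ‖g x‖₊ := by rw [ENNReal.coe_add]
lemma W_sub {N : ℝ} (f g : E n → ℂ) (hf : Measurable f) :
    ∫⁻ x, ENNReal.ofReal ((1+‖x‖)^N) * ‖(f - g) x‖₊ ≤
      (∫⁻ x, ENNReal.ofReal ((1+‖x‖)^N) * ‖f x‖₊) +
      (∫⁻ x, ENNReal.ofReal ((1+‖x‖)^N) * ‖g x‖₊) := by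
  rw [← lintegral_add_left (f := fun x => ENNReal.ofReal ((1+‖x‖)^N) * (‖f x‖₊ : ℝ≥0∞)) (wmeas.mul hf.nnnorm.coe_nnreal_ennreal)]
  refine lintegral_mono fun x => ?_
  rw [← mul_add]
  refine mul_le_mul_right ?_ _
  calc (‖(f - g) x‖₊ : ℝ≥0∞) ≤ ↑(‖f x‖₊ + ‖g x‖₊) := by
        exact_mod_cast nnnorm_sub_le (f x) (g x)
    _ = (‖f x‖₊ : ℝ≥0∞) + ‖g x‖₊ := by rw [ENNReal.coe_add]

lemma funI_continuous {δ : ℝ} (g : E n → ℂ) (hg : Continuous g) :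
    Continuous (funI n δ g) := by
  have h : funI n δ g = fun x => ((δ ^ (n-1) : ℝ))⁻¹ • g (TmapI n δ x) := rfl
  rw [h]
  exact (hg.comp (TmapI n δ).continuous_of_finiteDimensional).const_smul ((δ ^ (n-1) : ℝ))⁻¹

lemma W_funI' {N : ℝ} (hN : 0 ≤ N) {δ : ℝ} (hδ0 : 0 < δ) (hδ1 : δ ≤ 1)
    (g : E n → ℂ) (hg : Measurable g) :
    ∫⁻ x, ENNReal.ofReal ((1+‖x‖)^N) * ‖funI n δ g x‖₊ ≤
      ∫⁻ x, ENNReal.ofReal ((1+‖x‖)^N) * ‖g x‖₊ := W_funI hN hδ0 hδ1 g hg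

end Aux

set_option maxHeartbeats 1000000 in
theorem stmt_3
    (n : ℕ) (hn : 2 ≤ n) (ε : ℝ) (hε : 0 < ε)
    (φ : SchwartzMap (EuclideanSpace ℝ (Fin n)) ℂ)
    (hrad : ∀ x y : EuclideanSpace ℝ (Fin n), ‖x‖ = ‖y‖ → φ x = φ y)
    (hφ1 : ∀ ξ : EuclideanSpace ℝ (Fin n), ‖ξ‖ ≤ 1 → 𝓕 ⇑φ ξ = 1)
    (hφ0 : ∀ ξ : EuclideanSpace ℝ (Fin n), 2 ≤ ‖ξ‖ → 𝓕 ⇑φ ξ = 0)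
    (N : ℝ) (hN : 1 < N) :
    ∃ (α β : Fin n → ℕ) (C : ℝ), 0 < C ∧
      ∀ δ : ℝ, 0 < δ → δ < 1 → 2 ≤ δ ^ (-ε) →
      ∀ Ψ : ℕ → SchwartzMap (EuclideanSpace ℝ (Fin n)) ℂ,
        (∀ ξ, 𝓕 ⇑(Ψ 0) ξ = 𝓕 ⇑φ ξ) →
        (∀ k : ℕ, 1 ≤ k → ∀ ξ, 𝓕 ⇑(Ψ k) ξ =
          𝓕 ⇑φ ((δ ^ ((k : ℝ) * ε)) • ξ) - 𝓕 ⇑φ ((δ ^ (((k : ℝ) - 1) * ε)) • ξ)) →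
      ∀ Φ : ℕ → SchwartzMap (EuclideanSpace ℝ (Fin n)) ℂ,
        (∀ ξ, 𝓕 ⇑(Φ 0) ξ = 𝓕 ⇑φ ξ) →
        (∀ k : ℕ, 1 ≤ k → ∀ ξ, 𝓕 ⇑(Φ k) ξ =
          𝓕 ⇑φ (((2 : ℝ) ^ (-(k : ℝ))) • ξ) - 𝓕 ⇑φ (((2 : ℝ) ^ (1 - (k : ℝ))) • ξ)) →
      ∀ s : ℕ, (2 : ℝ) ^ s < δ ^ (-(2 * ε)) → δ ^ (-(2 * ε)) ≤ (2 : ℝ) ^ (s + 1) →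
      ∀ k : ℕ, k ≤ s →
      ∀ Υ : SchwartzMap (EuclideanSpace ℝ (Fin n)) ℂ, memS n α β Υ →
        (∫ x : EuclideanSpace ℝ (Fin n),
          (1 + (2 : ℝ) ^ (-((k : ℝ) + 1)) * ‖x‖) ^ N *
            ‖((funI n δ (⇑(Ψ 0) + ⇑(Ψ 1)) ⋆[ContinuousLinearMap.mul ℝ ℂ, volume] funI n δ ⇑(Φ k)) ⋆[ContinuousLinearMap.mul ℝ ℂ, volume] funI n δ ⇑Υ) x‖)
          ≤ C * δ ^ (-(2 * (N + 1) * ε)) * (2 : ℝ) ^ (-(k : ℝ)) := by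
  classical
  have hn1 : 1 ≤ n := le_trans one_le_two hn
  have hN0 : (0:ℝ) ≤ N := by linarith
  set m : ℕ := ⌈N⌉₊ + n + 1 with hm
  have hmge : N + ((n:ℝ)+1) ≤ (m:ℝ) := by
    have h1 := Nat.le_ceil N
    rw [hm]
    push_cast
    linarith
  set Cφ : ℝ := 2 ^ m * ((Finset.Iic (m, 0)).sup (fun p => SchwartzMap.seminorm ℝ p.1 p.2) φ)
    with hCφ
  have hCφ0 : 0 ≤ Cφ := by
    rw [hCφ]
    have := apply_nonneg
      (((Finset.Iic (m, 0)).sup (fun p => SchwartzMap.seminorm ℝ p.1 p.2)) :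
        Seminorm ℝ (SchwartzMap (EuclideanSpace ℝ (Fin n)) ℂ)) φ
    positivity
  set Bφ : ℝ≥0∞ := ENNReal.ofReal Cφ * Kn n with hBφ
  set BΥ : ℝ≥0∞ := ENNReal.ofReal (((n:ℝ)+1)^m) * Kn n with hBΥ
  set Mtot : ℝ≥0∞ := (3*Bφ) * (2*Bφ) * BΥ with hMtotdef
  have hKtop : Kn n ≠ ⊤ := (Kn_lt_top (n := n)).ne
  have hBφtop : Bφ ≠ ⊤ := ENNReal.mul_ne_top ENNReal.ofReal_ne_top hKtop
  have hBΥtop : BΥ ≠ ⊤ := ENNReal.mul_ne_top ENNReal.ofReal_ne_top hKtop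
  have hMtop : Mtot ≠ ⊤ := by
    refine ENNReal.mul_ne_top (ENNReal.mul_ne_top ?_ ?_) hBΥtop
    · exact ENNReal.mul_ne_top (by simp) hBφtop
    · exact ENNReal.mul_ne_top (by simp) hBφtop
  refine ⟨fun _ => m, fun _ => 0, Mtot.toReal + 1,
    lt_of_lt_of_le one_pos (le_add_of_nonneg_left ENNReal.toReal_nonneg), ?_⟩
  intro δ hδ0 hδ1 hδε Ψ hΨ0 hΨk Φf hΦ0 hΦk s hs1 hs2 k hk Υ hΥmem
  set F : EuclideanSpace ℝ (Fin n) → ℂ := funI n δ (⇑(Ψ 0) + ⇑(Ψ 1)) with hF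
  set G : EuclideanSpace ℝ (Fin n) → ℂ := funI n δ ⇑(Φf k) with hG
  set U : EuclideanSpace ℝ (Fin n) → ℂ := funI n δ ⇑Υ with hU
  set η : EuclideanSpace ℝ (Fin n) → ℂ :=
    (F ⋆[ContinuousLinearMap.mul ℝ ℂ, volume] G) ⋆[ContinuousLinearMap.mul ℝ ℂ, volume] U with hη
  have hφF : Integrable (𝓕 ⇑φ) := by
    have h : 𝓕 ⇑φ = ⇑(SchwartzMap.fourierTransformCLM ℝ φ) := by
      rw [SchwartzMap.fourierTransformCLM_apply, SchwartzMap.fourier_coe]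
    rw [h]; exact SchwartzMap.integrable _
  -- identify Ψ 0, Ψ 1, Φf k
  have hψ0 : ⇑(Ψ 0) = ⇑φ :=
    schwartz_eq_of_fourier_eq (Ψ 0) ⇑φ φ.continuous φ.integrable hφF hΨ0
  have ht10 : (0:ℝ) < δ ^ (((1:ℕ):ℝ) * ε) := Real.rpow_pos_of_pos hδ0 _
  have ht20 : (0:ℝ) < δ ^ ((((1:ℕ):ℝ) - 1) * ε) := Real.rpow_pos_of_pos hδ0 _
  have ht11 : δ ^ (((1:ℕ):ℝ) * ε) ≤ 1 :=
    Real.rpow_le_one hδ0.le hδ1.le (by push_cast; nlinarith [hε.le])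
  have ht21 : δ ^ ((((1:ℕ):ℝ) - 1) * ε) ≤ 1 :=
    Real.rpow_le_one hδ0.le hδ1.le (by push_cast; nlinarith [hε.le])
  have hψ1 : ⇑(Ψ 1) = dil ⇑φ (δ ^ (((1:ℕ):ℝ) * ε)) - dil ⇑φ (δ ^ ((((1:ℕ):ℝ) - 1) * ε)) :=
    schwartz_eq_dil_sub (Ψ 1) φ ht10 ht20 (hΨk 1 le_rfl)
  -- weighted L¹ bounds
  have hWφ : (∫⁻ x : EuclideanSpace ℝ (Fin n), ENNReal.ofReal ((1+‖x‖)^N) * ‖φ x‖₊) ≤ Bφ :=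
    W_le_of_decay hN0 hmge ⇑φ Cφ hCφ0 (fun x => schwartz_decay_bound φ m x)
  have hWdil : ∀ t : ℝ, 0 < t → t ≤ 1 →
      (∫⁻ x : EuclideanSpace ℝ (Fin n), ENNReal.ofReal ((1+‖x‖)^N) * ‖dil ⇑φ t x‖₊) ≤ Bφ :=
    fun t h0 h1 => le_trans (W_dil hN0 h0 h1 ⇑φ φ.continuous.measurable) hWφ
  have hWF : (∫⁻ x : EuclideanSpace ℝ (Fin n),
      ENNReal.ofReal ((1+‖x‖)^N) * ‖F x‖₊) ≤ 3*Bφ := by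
    rw [hF]
    refine le_trans (W_funI' hN0 hδ0 hδ1.le _
      ((Ψ 0).continuous.add (Ψ 1).continuous).measurable) ?_
    refine le_trans (W_add _ _ (Ψ 0).continuous.measurable) ?_
    have h1 : (∫⁻ x : EuclideanSpace ℝ (Fin n),
        ENNReal.ofReal ((1+‖x‖)^N) * ‖(Ψ 0) x‖₊) ≤ Bφ := by
      have : ⇑(Ψ 0) = ⇑φ := hψ0
      rw [this]; exact hWφ
    have h2 : (∫⁻ x : EuclideanSpace ℝ (Fin n),
        ENNReal.ofReal ((1+‖x‖)^N) * ‖(Ψ 1) x‖₊) ≤ Bφ + Bφ := by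
      rw [hψ1]
      refine le_trans (W_sub _ _ (dil_continuous φ).measurable) ?_
      exact add_le_add (hWdil _ ht10 ht11) (hWdil _ ht20 ht21)
    calc (∫⁻ x : EuclideanSpace ℝ (Fin n), ENNReal.ofReal ((1+‖x‖)^N) * ‖(Ψ 0) x‖₊)
          + (∫⁻ x : EuclideanSpace ℝ (Fin n), ENNReal.ofReal ((1+‖x‖)^N) * ‖(Ψ 1) x‖₊)
        ≤ Bφ + (Bφ + Bφ) := add_le_add h1 h2
      _ = 3*Bφ := by ring
  have hWG : (∫⁻ x : EuclideanSpace ℝ (Fin n),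
      ENNReal.ofReal ((1+‖x‖)^N) * ‖G x‖₊) ≤ 2*Bφ := by
    rw [hG]
    refine le_trans (W_funI' hN0 hδ0 hδ1.le _ (Φf k).continuous.measurable) ?_
    rcases Nat.eq_zero_or_pos k with rfl | hk1
    · have hφ0 : ⇑(Φf 0) = ⇑φ :=
        schwartz_eq_of_fourier_eq (Φf 0) ⇑φ φ.continuous φ.integrable hφF hΦ0
      rw [hφ0]
      calc (∫⁻ x : EuclideanSpace ℝ (Fin n), ENNReal.ofReal ((1+‖x‖)^N) * ‖φ x‖₊)
          ≤ Bφ := hWφ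
        _ ≤ 2*Bφ := by
            nth_rewrite 1 [← one_mul Bφ]
            exact mul_le_mul_left (by norm_num) _
    · have hu10 : (0:ℝ) < (2:ℝ) ^ (-(k:ℝ)) := Real.rpow_pos_of_pos two_pos _
      have hu20 : (0:ℝ) < (2:ℝ) ^ (1-(k:ℝ)) := Real.rpow_pos_of_pos two_pos _
      have hu11 : (2:ℝ) ^ (-(k:ℝ)) ≤ 1 :=
        Real.rpow_le_one_of_one_le_of_nonpos one_le_two
          (neg_nonpos.2 (by positivity))
      have hu21 : (2:ℝ) ^ (1-(k:ℝ)) ≤ 1 := by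
        refine Real.rpow_le_one_of_one_le_of_nonpos one_le_two ?_
        have : (1:ℝ) ≤ (k:ℝ) := by exact_mod_cast hk1
        linarith
      have hφk : ⇑(Φf k) = dil ⇑φ ((2:ℝ) ^ (-(k:ℝ))) - dil ⇑φ ((2:ℝ) ^ (1-(k:ℝ))) :=
        schwartz_eq_dil_sub (Φf k) φ hu10 hu20 (hΦk k hk1)
      rw [hφk]
      refine le_trans (W_sub _ _ (dil_continuous φ).measurable) ?_
      calc (∫⁻ x : EuclideanSpace ℝ (Fin n),
            ENNReal.ofReal ((1+‖x‖)^N) * ‖dil ⇑φ ((2:ℝ) ^ (-(k:ℝ))) x‖₊)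
          + (∫⁻ x : EuclideanSpace ℝ (Fin n),
            ENNReal.ofReal ((1+‖x‖)^N) * ‖dil ⇑φ ((2:ℝ) ^ (1-(k:ℝ))) x‖₊)
          ≤ Bφ + Bφ := add_le_add (hWdil _ hu10 hu11) (hWdil _ hu20 hu21)
        _ = 2*Bφ := (two_mul Bφ).symm
  have hWU : (∫⁻ x : EuclideanSpace ℝ (Fin n),
      ENNReal.ofReal ((1+‖x‖)^N) * ‖U x‖₊) ≤ BΥ := by
    rw [hU]
    refine le_trans (W_funI' hN0 hδ0 hδ1.le _ Υ.continuous.measurable) ?_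
    exact W_le_of_decay hN0 hmge ⇑Υ (((n:ℝ)+1)^m) (by positivity)
      (fun x => memS_decay hn1 Υ hΥmem x)
  -- triple convolution bound
  have htrip : (∫⁻ x : EuclideanSpace ℝ (Fin n), ENNReal.ofReal ((1+‖x‖)^N) *
      ‖η x‖₊) ≤ Mtot := by
    rw [hη]
    refine le_trans (triple_conv_bound hN0 F G U
      (by rw [hF]; exact (funI_continuous _ ((Ψ 0).continuous.add (Ψ 1).continuous)).measurable)
      (by rw [hG]; exact (funI_continuous _ (Φf k).continuous).measurable)
      (by rw [hU]; exact (funI_continuous _ Υ.continuous).measurable)) ?_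
    exact mul_le_mul' (mul_le_mul' hWF hWG) hWU
  -- the scalar inequality 1 ≤ δ^(-(2(N+1)ε)) * 2^(-k)
  have hδ2ε : (0:ℝ) < δ^(2*ε) := Real.rpow_pos_of_pos hδ0 _
  have h2s : (0:ℝ) < (2:ℝ)^s := by positivity
  have hsk : δ^(2*ε) ≤ (2:ℝ)^(-(k:ℝ)) := by
    have e1 : (2:ℝ)^(-(s:ℝ)) ≤ (2:ℝ)^(-(k:ℝ)) :=
      Real.rpow_le_rpow_of_exponent_le one_le_two
        (neg_le_neg (by exact_mod_cast hk))
    have e2 : (2:ℝ)^(-(s:ℝ)) = ((2:ℝ)^s)⁻¹ := by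
      rw [Real.rpow_neg (by norm_num), Real.rpow_natCast]
    have h4 : (2:ℝ)^s < (δ^(2*ε))⁻¹ := by
      rw [← Real.rpow_neg hδ0.le]
      exact hs1
    have e3 : δ^(2*ε) < ((2:ℝ)^s)⁻¹ := by
      rw [← one_div, lt_div_iff₀ h2s]
      nlinarith [mul_lt_mul_of_pos_left h4 hδ2ε, mul_inv_cancel₀ hδ2ε.ne']
    calc δ^(2*ε) ≤ ((2:ℝ)^s)⁻¹ := e3.le
      _ = (2:ℝ)^(-(s:ℝ)) := e2.symm
      _ ≤ (2:ℝ)^(-(k:ℝ)) := e1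
  have hone : (1:ℝ) ≤ δ ^ (-(2 * (N + 1) * ε)) * (2:ℝ) ^ (-(k:ℝ)) := by
    have hexp : -(2*N*ε) = -(2*(N+1)*ε) + 2*ε := by ring
    calc (1:ℝ) ≤ δ^(-(2*N*ε)) :=
          Real.one_le_rpow_of_pos_of_le_one_of_nonpos hδ0 hδ1.le (by nlinarith)
      _ = δ^(-(2*(N+1)*ε) + 2*ε) := by rw [hexp]
      _ = δ^(-(2*(N+1)*ε)) * δ^(2*ε) := Real.rpow_add hδ0 _ _
      _ ≤ δ^(-(2*(N+1)*ε)) * (2:ℝ)^(-(k:ℝ)) :=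
          mul_le_mul_of_nonneg_left hsk (Real.rpow_nonneg hδ0.le _)
  have hCle : Mtot.toReal + 1 ≤ (Mtot.toReal + 1) * δ ^ (-(2 * (N + 1) * ε)) * (2:ℝ)^(-(k:ℝ)) := by
    rw [mul_assoc]
    exact le_mul_of_one_le_right (add_nonneg ENNReal.toReal_nonneg zero_le_one) hone
  -- now the main estimate
  by_cases hInt : Integrable (fun x : EuclideanSpace ℝ (Fin n) =>
    (1 + (2 : ℝ) ^ (-((k : ℝ) + 1)) * ‖x‖) ^ N * ‖η x‖) volume
  swap
  · rw [integral_undef hInt]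
    have h0 : (0:ℝ) ≤ Mtot.toReal + 1 := add_nonneg ENNReal.toReal_nonneg zero_le_one
    have h1 : (0:ℝ) ≤ δ ^ (-(2 * (N + 1) * ε)) := Real.rpow_nonneg hδ0.le _
    have h2 : (0:ℝ) ≤ (2:ℝ)^(-(k:ℝ)) := Real.rpow_nonneg (by norm_num) _
    exact mul_nonneg (mul_nonneg h0 h1) h2
  · rw [integral_eq_lintegral_of_nonneg_ae
      (Filter.Eventually.of_forall fun x => by positivity) hInt.aestronglyMeasurable]
    have hwk : ∀ x : EuclideanSpace ℝ (Fin n),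
        ENNReal.ofReal ((1 + (2 : ℝ) ^ (-((k : ℝ) + 1)) * ‖x‖) ^ N * ‖η x‖) ≤
        ENNReal.ofReal ((1+‖x‖)^N) * ‖η x‖₊ := by
      intro x
      rw [ENNReal.ofReal_mul (by positivity), ofReal_norm_eq_enorm, enorm_eq_nnnorm]
      refine mul_le_mul_left (ENNReal.ofReal_le_ofReal ?_) _
      refine Real.rpow_le_rpow (by positivity) ?_ hN0
      have h2k1 : (2:ℝ)^(-((k:ℝ)+1)) ≤ 1 :=
        Real.rpow_le_one_of_one_le_of_nonpos one_le_two
          (neg_nonpos.2 (by positivity))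
      nlinarith [norm_nonneg x, mul_le_mul_of_nonneg_right h2k1 (norm_nonneg x)]
    have hlin : (∫⁻ x : EuclideanSpace ℝ (Fin n),
        ENNReal.ofReal ((1 + (2 : ℝ) ^ (-((k : ℝ) + 1)) * ‖x‖) ^ N * ‖η x‖)) ≤ Mtot :=
      le_trans (lintegral_mono hwk) htrip
    calc (∫⁻ x : EuclideanSpace ℝ (Fin n),
        ENNReal.ofReal ((1 + (2 : ℝ) ^ (-((k : ℝ) + 1)) * ‖x‖) ^ N * ‖η x‖)).toReal
        ≤ Mtot.toReal := ENNReal.toReal_mono hMtop hlin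
      _ ≤ Mtot.toReal + 1 := by linarith
      _ ≤ (Mtot.toReal + 1) * δ ^ (-(2 * (N + 1) * ε)) * (2:ℝ)^(-(k:ℝ)) := hCle
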